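/- arXiv:1602.03802 — 11 statements merged into one kernel-verified Lean document; each statement's English description precedes it below -/
import Mathlib

section
/- A connected simple graph G is 2K2-free if and only if G contains no induced subgraph isomorphic to any of the following three graphs: (H1) the path P5 on five vertices; (H2) the tadpole graph consisting of a triangle together with a path of length two attached to one vertex of the triangle (five vertices u,v,w,x,y with edges uv, uw, vw, wx, xy and no other edges); (H3) the bowtie graph consisting of two triangles sharing exactly one common vertex (five vertices u,v,w,x,y with edges uv, uw, vw, wx, wy, xy and no other edges). -/
open SimpleGraph

/-- A simple graph is `2K₂`-free: there are no four pairwise distinct vertices `a b c d`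
with `ab` and `cd` edges and none of `ac, ad, bc, bd` an edge. -/
def TwoK2Free {V : Type*} (G : SimpleGraph V) : Prop :=
  ¬ ∃ a b c d : V, a ≠ b ∧ a ≠ c ∧ a ≠ d ∧ b ≠ c ∧ b ≠ d ∧ c ≠ d ∧
    G.Adj a b ∧ G.Adj c d ∧ ¬ G.Adj a c ∧ ¬ G.Adj a d ∧ ¬ G.Adj b c ∧ ¬ G.Adj b d

/-- `H₂`: a triangle `0 1 2` with a path of length two `2 - 3 - 4` attached. -/
def graphH2 : SimpleGraph (Fin 5) :=
  SimpleGraph.fromRel (fun i j =>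
    (i = 0 ∧ j = 1) ∨ (i = 0 ∧ j = 2) ∨ (i = 1 ∧ j = 2) ∨ (i = 2 ∧ j = 3) ∨ (i = 3 ∧ j = 4))

/-- `H₃` (the bowtie): two triangles `0 1 2` and `2 3 4` sharing the vertex `2`. -/
def graphH3 : SimpleGraph (Fin 5) :=
  SimpleGraph.fromRel (fun i j =>
    (i = 0 ∧ j = 1) ∨ (i = 0 ∧ j = 2) ∨ (i = 1 ∧ j = 2) ∨ (i = 2 ∧ j = 3) ∨
    (i = 2 ∧ j = 4) ∨ (i = 3 ∧ j = 4))

/- ### Auxiliary lemmas -/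

lemma myLength_drop {V : Type*} {G : SimpleGraph V} :
    ∀ {u v : V} (p : G.Walk u v) (n : ℕ), (p.drop n).length = p.length - n := by
  intro u v p
  induction p with
  | nil => intro n; cases n <;> simp [Walk.drop]
  | cons h q ih =>
    intro n
    cases n with
    | zero => simp [Walk.drop]
    | succ n => simp [Walk.drop, ih]

lemma myDist_getVert {V : Type*} {G : SimpleGraph V} {u v : V} (p : G.Walk u v) (i : ℕ) :
    G.dist (p.getVert i) v ≤ p.length - i := by
  simpa [myLength_drop] using SimpleGraph.dist_le (p.drop i)

def emb_of {V : Type*} (H : SimpleGraph (Fin 5)) {G : SimpleGraph V} (v : Fin 5 → V)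
    (hinj : Function.Injective v) (hadj : ∀ i j, G.Adj (v i) (v j) ↔ H.Adj i j) :
    H ↪g G := ⟨⟨v, hinj⟩, hadj _ _⟩

lemma inj5 {W : Type*} {v0 v1 v2 v3 v4 : W} (h01 : v0 ≠ v1) (h02 : v0 ≠ v2) (h03 : v0 ≠ v3)
    (h04 : v0 ≠ v4) (h12 : v1 ≠ v2) (h13 : v1 ≠ v3) (h14 : v1 ≠ v4) (h23 : v2 ≠ v3)
    (h24 : v2 ≠ v4) (h34 : v3 ≠ v4) : Function.Injective ![v0, v1, v2, v3, v4] := by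
  intro i j h
  fin_cases i <;> fin_cases j <;> first | rfl | (exfalso; simp_all)

lemma embP5 {V : Type*} {G : SimpleGraph V} {v0 v1 v2 v3 v4 : V}
    (a01 : G.Adj v0 v1) (a12 : G.Adj v1 v2) (a23 : G.Adj v2 v3) (a34 : G.Adj v3 v4)
    (n02 : ¬ G.Adj v0 v2) (n03 : ¬ G.Adj v0 v3) (n04 : ¬ G.Adj v0 v4)
    (n13 : ¬ G.Adj v1 v3) (n14 : ¬ G.Adj v1 v4) (n24 : ¬ G.Adj v2 v4)
    (h02 : v0 ≠ v2) (h03 : v0 ≠ v3) (h04 : v0 ≠ v4) (h13 : v1 ≠ v3) (h14 : v1 ≠ v4)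
    (h24 : v2 ≠ v4) : Nonempty (pathGraph 5 ↪g G) := by
  refine ⟨emb_of _ ![v0,v1,v2,v3,v4]
    (inj5 a01.ne h02 h03 h04 a12.ne h13 h14 a23.ne h24 a34.ne) ?_⟩
  intro i j
  fin_cases i <;> fin_cases j <;>
    (try simp_all [pathGraph_adj, G.adj_comm, G.irrefl]) <;> decide

lemma embH2 {V : Type*} {G : SimpleGraph V} {v0 v1 v2 v3 v4 : V}
    (a01 : G.Adj v0 v1) (a02 : G.Adj v0 v2) (a12 : G.Adj v1 v2) (a23 : G.Adj v2 v3)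
    (a34 : G.Adj v3 v4)
    (n03 : ¬ G.Adj v0 v3) (n04 : ¬ G.Adj v0 v4)
    (n13 : ¬ G.Adj v1 v3) (n14 : ¬ G.Adj v1 v4) (n24 : ¬ G.Adj v2 v4)
    (h03 : v0 ≠ v3) (h04 : v0 ≠ v4) (h13 : v1 ≠ v3) (h14 : v1 ≠ v4)
    (h24 : v2 ≠ v4) : Nonempty (graphH2 ↪g G) := by
  refine ⟨emb_of _ ![v0,v1,v2,v3,v4]
    (inj5 a01.ne a02.ne h03 h04 a12.ne h13 h14 a23.ne h24 a34.ne) ?_⟩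
  intro i j
  fin_cases i <;> fin_cases j <;>
    (try simp_all [graphH2, fromRel_adj, G.adj_comm, G.irrefl]) <;> decide

lemma embH3 {V : Type*} {G : SimpleGraph V} {v0 v1 v2 v3 v4 : V}
    (a01 : G.Adj v0 v1) (a02 : G.Adj v0 v2) (a12 : G.Adj v1 v2) (a23 : G.Adj v2 v3)
    (a24 : G.Adj v2 v4) (a34 : G.Adj v3 v4)
    (n03 : ¬ G.Adj v0 v3) (n04 : ¬ G.Adj v0 v4)
    (n13 : ¬ G.Adj v1 v3) (n14 : ¬ G.Adj v1 v4)
    (h03 : v0 ≠ v3) (h04 : v0 ≠ v4) (h13 : v1 ≠ v3) (h14 : v1 ≠ v4) :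
    Nonempty (graphH3 ↪g G) := by
  refine ⟨emb_of _ ![v0,v1,v2,v3,v4]
    (inj5 a01.ne a02.ne h03 h04 a12.ne h13 h14 a23.ne a24.ne a34.ne) ?_⟩
  intro i j
  fin_cases i <;> fin_cases j <;>
    (try simp_all [graphH3, fromRel_adj, G.adj_comm, G.irrefl]) <;> decide

lemma aux_min {V : Type*} {G : SimpleGraph V} (hconn : G.Connected) {a b c d : V}
    (hab : G.Adj a b) (hcd : G.Adj c d)
    (nac : ¬ G.Adj a c) (nad : ¬ G.Adj a d) (nbc : ¬ G.Adj b c) (nbd : ¬ G.Adj b d)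
    (eac : a ≠ c) (ead : a ≠ d) (ebc : b ≠ c) (ebd : b ≠ d)
    (m1 : G.dist b c ≤ G.dist a c) (m2 : G.dist b c ≤ G.dist b d)
    (m3 : G.dist b c ≤ G.dist a d) :
    Nonempty (pathGraph 5 ↪g G) ∨ Nonempty (graphH2 ↪g G) ∨ Nonempty (graphH3 ↪g G) := by
  obtain ⟨w, hw⟩ := hconn.exists_walk_length_eq_dist b c
  have step : ∀ {x y : V}, G.Adj x y → G.dist x c ≤ 1 + G.dist y c := by
    intro x y hxy
    calc G.dist x c ≤ G.dist x y + G.dist y c := hconn.dist_triangle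
    _ ≤ 1 + G.dist y c := by
        have h1 : G.dist x y ≤ 1 := by
          simpa using SimpleGraph.dist_le (Walk.cons hxy Walk.nil)
        omega
  have hk0 : G.dist b c ≠ 0 := by
    intro h
    exact ebc (Walk.eq_of_length_eq_zero (hw.trans h))
  have hk1 : G.dist b c ≠ 1 := by
    intro h
    apply nbc
    have hadj := w.adj_getVert_succ (i := 0) (by omega)
    rw [w.getVert_zero] at hadj
    have hv : w.getVert 1 = c := by
      rw [show (1 : ℕ) = w.length by omega]; exact w.getVert_length
    rwa [hv] at hadj
  rcases Nat.lt_or_ge (G.dist b c) 3 with hk | hk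
  · -- dist b c = 2
    have hk2 : w.length = 2 := by omega
    set p1 := w.getVert 1 with hp1
    have hbp1 : G.Adj b p1 := by
      have := w.adj_getVert_succ (i := 0) (by omega)
      rwa [w.getVert_zero] at this
    have hp1c : G.Adj p1 c := by
      have := w.adj_getVert_succ (i := 1) (by omega)
      have hv : w.getVert 2 = c := by
        rw [show (2 : ℕ) = w.length by omega]; exact w.getVert_length
      rwa [hv] at this
    have e1a : p1 ≠ a := fun h => nac (h ▸ hp1c)
    have e1d : p1 ≠ d := fun h => nbd (h ▸ hbp1)
    by_cases hap1 : G.Adj a p1 <;> by_cases hp1d : G.Adj p1 d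
    · exact Or.inr (Or.inr (embH3 hab hap1 hbp1 hp1c hp1d hcd nac nad nbc nbd eac ead ebc ebd))
    · exact Or.inr (Or.inl (embH2 hab hap1 hbp1 hp1c hcd nac nad nbc nbd hp1d eac ead ebc ebd e1d))
    · refine Or.inr (Or.inl (embH2 hcd.symm hp1d.symm hp1c.symm hbp1.symm hab.symm
        (fun h => nbd h.symm) (fun h => nad h.symm) (fun h => nbc h.symm)
        (fun h => nac h.symm) (fun h => hap1 h.symm)
        (fun h => ebd h.symm) (fun h => ead h.symm) (fun h => ebc h.symm)
        (fun h => eac h.symm) e1a))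
    · exact Or.inl (embP5 hab hbp1 hp1c hcd (fun h => hap1 h) nac nad nbc nbd hp1d
        (Ne.symm e1a) eac ead ebc ebd e1d)
  · -- dist b c ≥ 3
    set p1 := w.getVert 1 with hp1
    set p2 := w.getVert 2 with hp2
    set p3 := w.getVert 3 with hp3
    have hb1 : G.Adj b p1 := by
      have := w.adj_getVert_succ (i := 0) (by omega)
      rwa [w.getVert_zero] at this
    have h12 : G.Adj p1 p2 := w.adj_getVert_succ (i := 1) (by omega)
    have h23 : G.Adj p2 p3 := w.adj_getVert_succ (i := 2) (by omega)
    have d1 : G.dist p1 c ≤ G.dist b c - 1 := by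
      rw [← hw]; exact myDist_getVert w 1
    have d2 : G.dist p2 c ≤ G.dist b c - 2 := by
      rw [← hw]; exact myDist_getVert w 2
    have d3 : G.dist p3 c ≤ G.dist b c - 3 := by
      rw [← hw]; exact myDist_getVert w 3
    have nb2 : ¬ G.Adj b p2 := fun h => by have := step h; omega
    have nb3 : ¬ G.Adj b p3 := fun h => by have := step h; omega
    have na2 : ¬ G.Adj a p2 := fun h => by have := step h; omega
    have na3 : ¬ G.Adj a p3 := fun h => by have := step h; omega
    have n13 : ¬ G.Adj p1 p3 := fun h => by
      have h1 := step h
      have h2 := step hb1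
      omega
    have ea1 : a ≠ p1 := fun h => by rw [h] at m1; omega
    have ea2 : a ≠ p2 := fun h => by rw [h] at m1; omega
    have ea3 : a ≠ p3 := fun h => by rw [h] at m1; omega
    have eb2 : b ≠ p2 := fun h => by rw [← h] at d2; omega
    have eb3 : b ≠ p3 := fun h => by rw [← h] at d3; omega
    have e13 : p1 ≠ p3 := fun h => by
      rw [← h] at d3
      have h2 := step hb1
      omega
    by_cases hap1 : G.Adj a p1
    · exact Or.inr (Or.inl (embH2 hab.symm hb1 hap1 h12 h23 nb2 nb3 na2 na3 n13
        eb2 eb3 ea2 ea3 e13))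
    · exact Or.inl (embP5 hab hb1 h12 h23 hap1 na2 na3 nb2 nb3 n13 ea1 ea2 ea3 eb2 eb3 e13)

/-- A connected graph is `2K₂`-free iff it has no induced subgraph isomorphic to
`P₅`, the tadpole `H₂`, or the bowtie `H₃`. -/
theorem twoK2Free_iff_forbidden {V : Type*} (G : SimpleGraph V) (hconn : G.Connected) :
    TwoK2Free G ↔
      ¬ Nonempty (pathGraph 5 ↪g G) ∧ ¬ Nonempty (graphH2 ↪g G) ∧
        ¬ Nonempty (graphH3 ↪g G) := by
  constructor
  · intro h2
    refine ⟨?_, ?_, ?_⟩ <;> rintro ⟨f⟩ <;>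
      refine h2 ⟨f 0, f 1, f 3, f 4,
        f.injective.ne (by decide), f.injective.ne (by decide), f.injective.ne (by decide),
        f.injective.ne (by decide), f.injective.ne (by decide), f.injective.ne (by decide),
        f.map_adj_iff.mpr ?_, f.map_adj_iff.mpr ?_,
        fun h => absurd (f.map_adj_iff.mp h) ?_, fun h => absurd (f.map_adj_iff.mp h) ?_,
        fun h => absurd (f.map_adj_iff.mp h) ?_, fun h => absurd (f.map_adj_iff.mp h) ?_⟩ <;>
      first
        | (rw [pathGraph_adj]; decide)
        | (simp only [graphH2, fromRel_adj]; decide)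
        | (simp only [graphH3, fromRel_adj]; decide)
  · rintro ⟨hP, hH2, hH3⟩ ⟨a, b, c, d, eab, eac, ead, ebc, ebd, ecd, hab, hcd, nac, nad,
      nbc, nbd⟩
    have main : Nonempty (pathGraph 5 ↪g G) ∨ Nonempty (graphH2 ↪g G) ∨
        Nonempty (graphH3 ↪g G) := by
      by_cases c1 : G.dist b c ≤ G.dist a c ∧ G.dist b c ≤ G.dist b d ∧
          G.dist b c ≤ G.dist a d
      · exact aux_min hconn hab hcd nac nad nbc nbd eac ead ebc ebd c1.1 c1.2.1 c1.2.2
      · by_cases c2 : G.dist a c ≤ G.dist b c ∧ G.dist a c ≤ G.dist a d ∧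
            G.dist a c ≤ G.dist b d
        · exact aux_min hconn hab.symm hcd nbc nbd nac nad ebc ebd eac ead c2.1 c2.2.1 c2.2.2
        · by_cases c3 : G.dist b d ≤ G.dist a d ∧ G.dist b d ≤ G.dist b c ∧
              G.dist b d ≤ G.dist a c
          · exact aux_min hconn hab hcd.symm nad nac nbd nbc ead eac ebd ebc c3.1 c3.2.1 c3.2.2
          · have c4 : G.dist a d ≤ G.dist b d ∧ G.dist a d ≤ G.dist a c ∧
                G.dist a d ≤ G.dist b c := by
              push_neg at c1 c2 c3
              omega
            exact aux_min hconn hab.symm hcd.symm nbd nbc nad nac ebd ebc ead eac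
              c4.1 c4.2.1 c4.2.2
    rcases main with h | h | h
    · exact hP h
    · exact hH2 h
    · exact hH3 h
end

section
/- Let G be a connected non-complete 2K2-free simple graph and let S be a minimal vertex separator of G. Then at most one connected component of G − S is non-trivial, i.e., at most one component of G − S has more than one vertex. -/
open SimpleGraph

/-- `S ⊊ V(G)` is a vertex separator: deleting `S` leaves a disconnected graph. -/
def IsSeparator {V : Type*} (G : SimpleGraph V) (S : Set V) : Prop :=
  S ≠ Set.univ ∧ ¬ (G.induce (Sᶜ : Set V)).Connected

/-- A minimal vertex separator: no proper subset is a separator. -/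
def IsMinSeparator {V : Type*} (G : SimpleGraph V) (S : Set V) : Prop :=
  IsSeparator G S ∧ ∀ S' : Set V, S' ⊂ S → ¬ IsSeparator G S'

/-- A connected component is trivial if its support is a single vertex. -/
def IsTrivialComp {α : Type*} {H : SimpleGraph α} (C : H.ConnectedComponent) : Prop :=
  ∃ v, C.supp = {v}

/-- In a connected non-complete `2K₂`-free graph, at most one connected component of
`G − S` is non-trivial, for any minimal vertex separator `S`. -/
theorem atMostOne_nontrivial_component {V : Type*} (G : SimpleGraph V)
    (hconn : G.Connected) (hnc : ∃ u v : V, u ≠ v ∧ ¬ G.Adj u v)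
    (h2k2 : TwoK2Free G) (S : Set V) (hS : IsMinSeparator G S) :
    ∀ C D : (G.induce (Sᶜ : Set V)).ConnectedComponent,
      ¬ IsTrivialComp C → ¬ IsTrivialComp D → C = D := by
  intro C D hC hD
  by_contra hne
  have key : ∀ E : (G.induce (Sᶜ : Set V)).ConnectedComponent, ¬ IsTrivialComp E →
      ∃ a b : (Sᶜ : Set V), (G.induce (Sᶜ : Set V)).Adj a b ∧
        (G.induce (Sᶜ : Set V)).connectedComponentMk a = E ∧
        (G.induce (Sᶜ : Set V)).connectedComponentMk b = E := by
    intro E hE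
    obtain ⟨v, hv⟩ := E.exists_rep
    have hvsupp : v ∈ E.supp := by
      rw [SimpleGraph.ConnectedComponent.mem_supp_iff]; exact hv
    have hex : ∃ w ∈ E.supp, w ≠ v := by
      by_contra h
      push_neg at h
      exact hE ⟨v, Set.eq_singleton_iff_unique_mem.mpr ⟨hvsupp, fun w hw => h w hw⟩⟩
    obtain ⟨w, hw, hwv⟩ := hex
    rw [SimpleGraph.ConnectedComponent.mem_supp_iff] at hw
    have hreach : (G.induce (Sᶜ : Set V)).Reachable w v :=
      SimpleGraph.ConnectedComponent.exact (hw.trans hv.symm)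
    obtain ⟨p⟩ := hreach
    cases p with
    | nil => exact absurd rfl hwv
    | @cons _ b _ h q =>
      refine ⟨w, b, h, hw, ?_⟩
      rw [← hw]
      exact (SimpleGraph.ConnectedComponent.sound h.reachable).symm
  obtain ⟨a, b, hab, haC, hbC⟩ := key C hC
  obtain ⟨c, d, hcd, hcD, hdD⟩ := key D hD
  have nadj : ∀ (x y : (Sᶜ : Set V)),
      (G.induce (Sᶜ : Set V)).connectedComponentMk x = C →
      (G.induce (Sᶜ : Set V)).connectedComponentMk y = D →
      ¬ G.Adj x.val y.val := by
    intro x y hx hy h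
    have h' : (G.induce (Sᶜ : Set V)).Adj x y := h
    exact hne (by rw [← hx, ← hy]; exact SimpleGraph.ConnectedComponent.sound h'.reachable)
  have hne' : ∀ (x y : (Sᶜ : Set V)),
      (G.induce (Sᶜ : Set V)).connectedComponentMk x = C →
      (G.induce (Sᶜ : Set V)).connectedComponentMk y = D →
      x.val ≠ y.val := by
    intro x y hx hy h
    exact hne (by rw [← hx, ← hy, Subtype.ext h])
  exact h2k2 ⟨a.val, b.val, c.val, d.val,
    Subtype.coe_ne_coe.mpr hab.ne, hne' a c haC hcD, hne' a d haC hdD,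
    hne' b c hbC hcD, hne' b d hbC hdD,
    Subtype.coe_ne_coe.mpr hcd.ne,
    hab, hcd, nadj a c haC hcD, nadj a d haC hdD, nadj b c hbC hcD, nadj b d hbC hdD⟩
end

section
/- Let G be a connected non-complete 2K2-free simple graph, let S be a minimal vertex separator of G, and suppose G1 is a non-trivial connected component of G − S. Then every edge {u,v} of G1 is universal to S, i.e., every vertex x ∈ S is adjacent in G to u or to v. -/
open SimpleGraph

lemma aux_key {V : Type*} (G : SimpleGraph V) (S : Set V) (x : V) :
    ∀ (w t : ((S \ {x})ᶜ : Set V))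
      (_ : (G.induce ((S \ {x})ᶜ : Set V)).Walk w t)
      (hw : (w : V) ∈ (Sᶜ : Set V)) (ht : (t : V) ∈ (Sᶜ : Set V)),
      ¬ (G.induce (Sᶜ : Set V)).Reachable ⟨w, hw⟩ ⟨t, ht⟩ →
      ∃ y : (Sᶜ : Set V), G.Adj x (y : V) ∧
        (G.induce (Sᶜ : Set V)).Reachable ⟨w, hw⟩ y := by
  intro w t p
  induction p with
  | nil =>
    intro hw ht hnr
    exact absurd Reachable.rfl hnr
  | @cons a m t' h q ih =>
    intro hw ht hnr
    by_cases hm : (m : V) ∈ (Sᶜ : Set V)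
    · have hadj : (G.induce (Sᶜ : Set V)).Adj ⟨a, hw⟩ ⟨m, hm⟩ := h
      have hr := hadj.reachable
      obtain ⟨y, hxy, hry⟩ := ih hm ht (fun hx => hnr (hr.trans hx))
      exact ⟨y, hxy, hr.trans hry⟩
    · have hmS : (m : V) ∈ S := by simpa using hm
      have hmx : (m : V) = x := by
        by_contra hne
        exact m.2 ⟨hmS, hne⟩
      refine ⟨⟨a, hw⟩, ?_, Reachable.refl _⟩
      have hadj : G.Adj (a : V) (m : V) := h
      rw [hmx] at hadj
      exact hadj.symm

/-- In a connected non-complete `2K₂`-free graph, every edge of a non-trivial component `G₁`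
of `G − S` is universal to the minimal vertex separator `S`: every `x ∈ S` is adjacent
to `u` or to `v`. -/
theorem edge_universal_to_separator {V : Type*} (G : SimpleGraph V)
    (hconn : G.Connected) (hnc : ∃ u v : V, u ≠ v ∧ ¬ G.Adj u v)
    (h2k2 : TwoK2Free G) (S : Set V) (hS : IsMinSeparator G S)
    (G1 : (G.induce (Sᶜ : Set V)).ConnectedComponent) (hG1 : ¬ IsTrivialComp G1) :
    ∀ u v : (Sᶜ : Set V), u ∈ G1.supp → v ∈ G1.supp →
      (G.induce (Sᶜ : Set V)).Adj u v →
      ∀ x ∈ S, G.Adj (u : V) x ∨ G.Adj (v : V) x := by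
  intro u v hu hv huv x hxS
  by_contra hcon
  push_neg at hcon
  obtain ⟨hxu, hxv⟩ := hcon
  -- G − S is not preconnected
  have : Nonempty (Sᶜ : Set V) := ⟨u⟩
  have hnp : ¬ (G.induce (Sᶜ : Set V)).Preconnected :=
    fun h => hS.1.2 ⟨h⟩
  have hab : ∃ a b : (Sᶜ : Set V), ¬ (G.induce (Sᶜ : Set V)).Reachable a b := by
    by_contra h
    push_neg at h
    exact hnp h
  obtain ⟨a, b, hab⟩ := hab
  -- a vertex not reachable from u
  have hwex : ∃ w : (Sᶜ : Set V), ¬ (G.induce (Sᶜ : Set V)).Reachable w u := by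
    by_cases h : (G.induce (Sᶜ : Set V)).Reachable a u
    · exact ⟨b, fun hb => hab (h.trans hb.symm)⟩
    · exact ⟨a, h⟩
  obtain ⟨w, hwu⟩ := hwex
  -- S \ {x} is not a separator, so G − (S \ {x}) is connected
  have hTne : (S \ {x}) ≠ Set.univ := by
    intro h
    have : x ∈ S \ {x} := h ▸ Set.mem_univ x
    exact this.2 rfl
  have hTconn : (G.induce ((S \ {x})ᶜ : Set V)).Connected := by
    by_contra hc
    exact hS.2 (S \ {x}) (Set.sdiff_singleton_ssubset.mpr hxS) ⟨hTne, hc⟩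
  have hST : ∀ z : V, z ∈ (Sᶜ : Set V) → z ∈ ((S \ {x})ᶜ : Set V) :=
    fun z hz h => hz h.1
  obtain ⟨p⟩ := hTconn.preconnected ⟨(w : V), hST _ w.2⟩ ⟨(u : V), hST _ u.2⟩
  obtain ⟨y, hxy, hwy⟩ := aux_key G S x _ _ p w.2 u.2 hwu
  -- ¬ Reachable y u
  have hyu : ¬ (G.induce (Sᶜ : Set V)).Reachable y u :=
    fun h => hwu (hwy.trans h)
  have hvu : (G.induce (Sᶜ : Set V)).Reachable v u := huv.symm.reachable
  have hGuv : G.Adj (u : V) (v : V) := huv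
  refine h2k2 ⟨(u : V), (v : V), x, (y : V), hGuv.ne, ?_, ?_, ?_, ?_, ?_, hGuv, hxy, hxu, ?_, hxv, ?_⟩
  · exact fun h => u.2 (h ▸ hxS)
  · intro h
    exact hyu (by rw [show y = u from Subtype.ext h.symm])
  · exact fun h => v.2 (h ▸ hxS)
  · intro h
    exact hyu (by rw [show y = v from Subtype.ext h.symm]; exact hvu)
  · exact fun h => y.2 (h ▸ hxS)
  · intro h
    have : (G.induce (Sᶜ : Set V)).Adj u y := h
    exact hyu this.symm.reachable
  · intro h
    have : (G.induce (Sᶜ : Set V)).Adj v y := h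
    exact hyu (this.symm.reachable.trans hvu)
end

section
/- Let G be a connected non-complete 2K2-free simple graph and let S be a minimal vertex separator of G. Then the subgraph of G induced on S has at most one non-trivial connected component. -/
open SimpleGraph

/-- A non-trivial connected component contains an edge. -/
lemma exists_adj_of_not_trivial {α : Type*} {H : SimpleGraph α} (C : H.ConnectedComponent)
    (h : ¬ IsTrivialComp C) :
    ∃ a b, H.Adj a b ∧ H.connectedComponentMk a = C := by
  obtain ⟨v, hv⟩ := C.exists_rep
  have hvs : v ∈ C.supp := by rw [ConnectedComponent.mem_supp_iff]; exact hv
  obtain ⟨w, hw, hwv⟩ : ∃ w ∈ C.supp, w ≠ v := by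
    by_contra h'
    push_neg at h'
    refine h ⟨v, ?_⟩
    ext x
    simp only [Set.mem_singleton_iff]
    exact ⟨fun hx => h' x hx, fun hx => hx ▸ hvs⟩
  rw [ConnectedComponent.mem_supp_iff] at hw
  obtain ⟨p⟩ : H.Reachable w v := ConnectedComponent.exact (hw.trans hv.symm)
  cases p with
  | nil => exact absurd rfl hwv
  | cons hadj q => exact ⟨w, _, hadj, hw⟩

/-- In a connected non-complete `2K₂`-free graph, the subgraph induced on a minimal vertex
separator `S` has at most one non-trivial connected component. -/
theorem separator_atMostOne_nontrivial_component {V : Type*} (G : SimpleGraph V)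
    (hconn : G.Connected) (hnc : ∃ u v : V, u ≠ v ∧ ¬ G.Adj u v)
    (h2k2 : TwoK2Free G) (S : Set V) (hS : IsMinSeparator G S) :
    ∀ C D : (G.induce S).ConnectedComponent,
      ¬ IsTrivialComp C → ¬ IsTrivialComp D → C = D := by
  intro C D hC hD
  by_contra hne
  obtain ⟨a, b, hab, haC⟩ := exists_adj_of_not_trivial C hC
  obtain ⟨c, d, hcd, hcD⟩ := exists_adj_of_not_trivial D hD
  have hbC : (G.induce S).connectedComponentMk b = C := by
    rw [← haC]; exact (ConnectedComponent.sound hab.reachable).symm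
  have hdD : (G.induce S).connectedComponentMk d = D := by
    rw [← hcD]; exact (ConnectedComponent.sound hcd.reachable).symm
  -- crossing facts
  have cross : ∀ x y : S, (G.induce S).connectedComponentMk x = C →
      (G.induce S).connectedComponentMk y = D → (x : V) ≠ (y : V) ∧ ¬ G.Adj x y := by
    intro x y hx hy
    constructor
    · intro hxy
      apply hne
      rw [← hx, ← hy, Subtype.ext hxy]
    · intro hadj
      apply hne
      have : (G.induce S).Adj x y := hadj
      rw [← hx, ← hy]
      exact ConnectedComponent.sound this.reachable
  obtain ⟨hac, hac'⟩ := cross a c haC hcD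
  obtain ⟨had, had'⟩ := cross a d haC hdD
  obtain ⟨hbc, hbc'⟩ := cross b c hbC hcD
  obtain ⟨hbd, hbd'⟩ := cross b d hbC hdD
  exact h2k2 ⟨a, b, c, d, fun h => hab.ne (Subtype.ext h), hac, had, hbc, hbd,
    fun h => hcd.ne (Subtype.ext h), hab, hcd, hac', had', hbc', hbd'⟩
end

section
/- Let G be a connected non-complete 2K2-free simple graph and let S be a minimal vertex separator of G. Then G − S has at least one trivial component, i.e., at least one connected component of G − S consists of a single vertex. -/
open SimpleGraph

/-- In a connected non-complete `2K₂`-free graph, `G − S` has at least one trivial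
component, for any minimal vertex separator `S`. -/
theorem exists_trivial_component {V : Type*} (G : SimpleGraph V)
    (hconn : G.Connected) (hnc : ∃ u v : V, u ≠ v ∧ ¬ G.Adj u v)
    (h2k2 : TwoK2Free G) (S : Set V) (hS : IsMinSeparator G S) :
    ∃ C : (G.induce (Sᶜ : Set V)).ConnectedComponent, IsTrivialComp C := by
  classical
  by_contra hno
  push_neg at hno
  obtain ⟨⟨hSne, hdisc⟩, -⟩ := hS
  set H := G.induce (Sᶜ : Set V) with hH
  have hcne : (Sᶜ : Set V).Nonempty := by
    rw [Set.nonempty_compl]; exact hSne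
  have hne : Nonempty (Sᶜ : Set V) := hcne.to_subtype
  have hpre : ¬ H.Preconnected := fun hp => hdisc ⟨hp⟩
  rw [SimpleGraph.Preconnected] at hpre
  push_neg at hpre
  obtain ⟨x, y, hxy⟩ := hpre
  -- every vertex has a neighbor in H
  have nbr : ∀ z : (Sᶜ : Set V), ∃ w, H.Adj z w := by
    intro z
    have hnt := hno (H.connectedComponentMk z)
    rw [IsTrivialComp] at hnt
    push_neg at hnt
    have hz : z ∈ (H.connectedComponentMk z).supp := rfl
    have : ¬ (H.connectedComponentMk z).supp ⊆ {z} := by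
      intro hsub
      exact hnt z (Set.Subset.antisymm hsub (by simpa using hz))
    obtain ⟨w, hw, hwz⟩ := Set.not_subset.mp this
    have hwz' : w ≠ z := by simpa using hwz
    have hre : H.Reachable w z := SimpleGraph.ConnectedComponent.exact hw
    obtain ⟨p⟩ := hre.symm
    cases p with
    | nil => exact absurd rfl hwz'.symm
    | cons h _ => exact ⟨_, h⟩
  obtain ⟨a, hxa⟩ := nbr x
  obtain ⟨b, hyb⟩ := nbr y
  have hrxa : H.Reachable x a := hxa.reachable
  have hryb : H.Reachable y b := hyb.reachable
  have hxyne : x ≠ y := fun h => hxy (h ▸ SimpleGraph.Reachable.refl x)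
  have hxbne : x ≠ b := fun h => hxy (h ▸ hryb.symm)
  have hayne : a ≠ y := fun h => hxy (hrxa.trans (h ▸ SimpleGraph.Reachable.refl a))
  have habne : a ≠ b := fun h => hxy (hrxa.trans (h ▸ hryb.symm))
  refine h2k2 ⟨↑x, ↑a, ↑y, ↑b, ?_, ?_, ?_, ?_, ?_, ?_, ?_, ?_, ?_, ?_, ?_, ?_⟩
  · exact Subtype.coe_ne_coe.mpr hxa.ne
  · exact Subtype.coe_ne_coe.mpr hxyne
  · exact Subtype.coe_ne_coe.mpr hxbne
  · exact Subtype.coe_ne_coe.mpr hayne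
  · exact Subtype.coe_ne_coe.mpr habne
  · exact Subtype.coe_ne_coe.mpr hyb.ne
  · exact hxa
  · exact hyb
  · intro h
    have hadj : H.Adj x y := h
    exact hxy hadj.reachable
  · intro h
    have hadj : H.Adj x b := h
    exact hxy (hadj.reachable.trans hryb.symm)
  · intro h
    have hadj : H.Adj a y := h
    exact hxy (hrxa.trans hadj.reachable)
  · intro h
    have hadj : H.Adj a b := h
    exact hxy (hrxa.trans (hadj.reachable.trans hryb.symm))
end

section
/- Let G be a connected non-complete 2K2-free simple graph and let u be a vertex of G of minimum degree, i.e., deg(u) ≤ deg(v) for all vertices v of G. Then the neighborhood N_G(u) of u is a minimal vertex separator of G. -/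
open SimpleGraph

private lemma induce_adj_iff {V : Type*} (G : SimpleGraph V) (s : Set V) (a b : s) :
    (G.induce s).Adj a b ↔ G.Adj a b := Iff.rfl

/-- In a connected non-complete `2K₂`-free graph, the neighborhood of a minimum degree
vertex is a minimal vertex separator. -/
theorem neighborhood_minDegree_isMinSeparator {V : Type*} [Fintype V]
    (G : SimpleGraph V) [DecidableRel G.Adj]
    (hconn : G.Connected) (hnc : ∃ u v : V, u ≠ v ∧ ¬ G.Adj u v)
    (h2k2 : TwoK2Free G) (u : V) (hu : ∀ v : V, G.degree u ≤ G.degree v) :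
    IsMinSeparator G (G.neighborSet u) := by
  classical
  set S : Set V := G.neighborSet u with hSdef
  have huS : u ∉ S := fun h => G.loopless.irrefl u h
  -- a vertex outside S ∪ {u}
  have hw : ∃ w : V, w ≠ u ∧ w ∉ S := by
    by_contra h
    push_neg at h
    obtain ⟨a, b, hab, hnadj⟩ := hnc
    have hcard2 : 2 ≤ Fintype.card V := Fintype.one_lt_card_iff_nontrivial.2 ⟨a, b, hab⟩
    have hdegu : G.degree u = Fintype.card V - 1 := by
      have : G.neighborFinset u = Finset.univ.erase u := by
        ext v
        simp only [mem_neighborFinset, Finset.mem_erase, Finset.mem_univ, and_true]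
        constructor
        · intro hv; exact fun hvu => G.loopless.irrefl u (hvu ▸ hv.symm)
        · intro hv; exact h v hv
      rw [degree, this, Finset.card_erase_of_mem (Finset.mem_univ u), Finset.card_univ]
    have hdegb : G.degree b ≤ Fintype.card V - 2 := by
      have hsub : G.neighborFinset b ⊆ Finset.univ \ {a, b} := by
        intro v hv
        rw [mem_neighborFinset] at hv
        simp only [Finset.mem_sdiff, Finset.mem_univ, Finset.mem_insert,
          Finset.mem_singleton, true_and]
        push_neg
        constructor
        · rintro rfl; exact hnadj hv.symm
        · rintro rfl; exact G.loopless.irrefl _ hv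
      calc G.degree b ≤ (Finset.univ \ ({a, b} : Finset V)).card :=
            Finset.card_le_card hsub
        _ = Fintype.card V - 2 := by
            rw [Finset.card_sdiff_of_subset (Finset.subset_univ _), Finset.card_univ,
              Finset.card_pair hab]
    have := hu b
    omega
  obtain ⟨w, hwu, hwS⟩ := hw
  constructor
  · -- separator
    refine ⟨fun h => huS (h.symm ▸ Set.mem_univ u), ?_⟩
    intro hcon
    have hr : (G.induce (Sᶜ : Set V)).Reachable ⟨u, huS⟩ ⟨w, hwS⟩ :=
      hcon.preconnected _ _
    obtain ⟨p⟩ := hr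
    have hne : (⟨u, huS⟩ : (Sᶜ : Set V)) ≠ ⟨w, hwS⟩ := by
      intro h
      exact hwu (congrArg Subtype.val h).symm
    have hnil : ¬ p.Nil := SimpleGraph.Walk.not_nil_of_ne hne
    have hadj := p.adj_snd hnil
    rw [induce_adj_iff] at hadj
    exact (p.getVert 1).2 hadj
  · -- minimality
    intro S' hss hsep
    obtain ⟨hne', hnconn⟩ := hsep
    apply hnconn
    have huT : u ∉ S' := fun h => huS (hss.subset h)
    obtain ⟨x, hxS, hxS'⟩ := Set.exists_of_ssubset hss
    have hux : G.Adj u x := hxS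
    -- every vertex outside S' is reachable from u in the induced graph
    have key : ∀ (v : V) (hv : v ∉ S'),
        (G.induce (S'ᶜ : Set V)).Reachable ⟨u, huT⟩ ⟨v, hv⟩ := by
      intro v hv
      by_contra hreach
      have huv : ¬ G.Adj u v := by
        intro h
        exact hreach (SimpleGraph.Adj.reachable
          (show (G.induce (S'ᶜ : Set V)).Adj ⟨u, huT⟩ ⟨v, hv⟩ from h))
      have hxv : ¬ G.Adj x v := by
        intro h
        exact hreach ((SimpleGraph.Adj.reachable
          (show (G.induce (S'ᶜ : Set V)).Adj ⟨u, huT⟩ ⟨x, hxS'⟩ from hux)).trans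
          (SimpleGraph.Adj.reachable
          (show (G.induce (S'ᶜ : Set V)).Adj ⟨x, hxS'⟩ ⟨v, hv⟩ from h)))
      -- v has a neighbor outside S'
      obtain ⟨y, hvy, hyS'⟩ : ∃ y, G.Adj v y ∧ y ∉ S' := by
        by_contra h
        push_neg at h
        have hsub : G.neighborFinset v ⊆ (Set.toFinite S').toFinset := by
          intro y hy
          rw [Set.Finite.mem_toFinset]
          exact h y ((G.mem_neighborFinset v y).1 hy)
        have h1 : (Set.toFinite S').toFinset.card < (Set.toFinite S).toFinset.card :=
          Finset.card_lt_card (Set.Finite.toFinset_ssubset_toFinset.2 hss)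
        have h2 : (Set.toFinite S).toFinset.card = G.degree u := by
          rw [degree]
          congr 1
          ext y
          simp [hSdef, mem_neighborFinset, Set.Finite.mem_toFinset]
        have h3 : G.degree v ≤ (Set.toFinite S').toFinset.card :=
          Finset.card_le_card hsub
        have h4 := hu v
        omega
      have huy : ¬ G.Adj u y := by
        intro h
        exact hreach ((SimpleGraph.Adj.reachable
          (show (G.induce (S'ᶜ : Set V)).Adj ⟨u, huT⟩ ⟨y, hyS'⟩ from h)).trans
          (SimpleGraph.Adj.reachable
          (show (G.induce (S'ᶜ : Set V)).Adj ⟨y, hyS'⟩ ⟨v, hv⟩ from hvy.symm)))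
      have hxy : ¬ G.Adj x y := by
        intro h
        exact hreach (((SimpleGraph.Adj.reachable
          (show (G.induce (S'ᶜ : Set V)).Adj ⟨u, huT⟩ ⟨x, hxS'⟩ from hux)).trans
          (SimpleGraph.Adj.reachable
          (show (G.induce (S'ᶜ : Set V)).Adj ⟨x, hxS'⟩ ⟨y, hyS'⟩ from h))).trans
          (SimpleGraph.Adj.reachable
          (show (G.induce (S'ᶜ : Set V)).Adj ⟨y, hyS'⟩ ⟨v, hv⟩ from hvy.symm)))
      refine h2k2 ⟨u, x, v, y, hux.ne, ?_, ?_, ?_, ?_, hvy.ne, hux, hvy, huv, huy, hxv, hxy⟩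
      · rintro rfl; exact hreach (SimpleGraph.Reachable.refl _)
      · rintro rfl; exact huv hvy.symm
      · rintro rfl; exact huv hux
      · rintro rfl; exact hxv hvy.symm
    have : Nonempty (↥(S'ᶜ : Set V)) := ⟨⟨u, huT⟩⟩
    exact SimpleGraph.Connected.mk (fun a b => (key a.1 a.2).symm.trans (key b.1 b.2))
end

section
/- Let G be a connected non-complete simple graph that is 2K2-free, C3-free and C4-free (no induced subgraph isomorphic to 2K2, to the triangle C3, or to the cycle C4), and let S be any minimal vertex separator of G. Then S is an independent set of G. -/
open SimpleGraph

/-- `G` has no induced cycle on `n` vertices. -/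
def NoInducedCycle {V : Type*} (n : ℕ) (G : SimpleGraph V) : Prop :=
  ¬ Nonempty (cycleGraph n ↪g G)

/-- If `s ∈ S` and `S` is a minimal separator, a vertex `z ∉ S` whose component in `G - S`
is "edgeless at z" and which cannot reach some other vertex of `G - S` must be adjacent to `s`. -/
lemma adj_of_minsep {V : Type*} (G : SimpleGraph V) (S : Set V)
    (hmin : ∀ S' : Set V, S' ⊂ S → ¬ (S' ≠ Set.univ ∧ ¬ (G.induce (S'ᶜ : Set V)).Connected))
    {s : V} (hs : s ∈ S)
    (z w : ↥(Sᶜ)) (hzw : ¬ (G.induce (Sᶜ : Set V)).Reachable z w)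
    (hz : ∀ p : ↥(Sᶜ), ¬ (G.induce (Sᶜ : Set V)).Adj z p) : G.Adj ↑z s := by
  have hsub : S \ {s} ⊂ S := Set.sdiff_singleton_ssubset.mpr hs
  have hns := hmin _ hsub
  push_neg at hns
  have hne : S \ {s} ≠ Set.univ := by
    intro h
    have : s ∈ S \ {s} := h ▸ Set.mem_univ s
    exact this.2 rfl
  have hconn := hns hne
  have hzmem : (↑z : V) ∈ ((S \ {s})ᶜ : Set V) := fun h => z.2 h.1
  have hwmem : (↑w : V) ∈ ((S \ {s})ᶜ : Set V) := fun h => w.2 h.1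
  have hzw' : (↑z : V) ≠ ↑w := by
    intro h
    exact hzw (by rw [Subtype.ext h])
  obtain ⟨p⟩ := hconn.preconnected ⟨↑z, hzmem⟩ ⟨↑w, hwmem⟩
  have hnn : ¬ p.Nil := SimpleGraph.Walk.not_nil_of_ne (by
    intro h; exact hzw' (congrArg Subtype.val h :))
  set b := p.getVert 1 with hbdef
  · have hadj : G.Adj ↑z ↑b := p.adj_snd hnn
    have hb : (↑b : V) ∉ S \ {s} := b.2
    by_cases hbS : (↑b : V) ∈ S
    · have : (↑b : V) = s := by
        by_contra hne'
        exact hb ⟨hbS, hne'⟩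
      rwa [this] at hadj
    · exact absurd hadj (hz ⟨↑b, hbS⟩)

lemma triangle_emb {V : Type*} {G : SimpleGraph V} {a b c : V}
    (hab : G.Adj a b) (hac : G.Adj a c) (hbc : G.Adj b c) :
    Nonempty (cycleGraph 3 ↪g G) := by
  refine ⟨⟨⟨![a, b, c], ?_⟩, ?_⟩⟩
  · intro i j h
    fin_cases i <;> fin_cases j <;>
      simp_all [Matrix.cons_val_zero, Matrix.cons_val_one, hab.ne, hac.ne, hbc.ne,
        hab.ne', hac.ne', hbc.ne']
  · intro i j
    rw [cycleGraph_three_eq_top, top_adj]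
    show G.Adj (![a, b, c] i) (![a, b, c] j) ↔ i ≠ j
    fin_cases i <;> fin_cases j <;>
      simp [hab, hac, hbc, hab.symm, hac.symm, hbc.symm, G.irrefl,
        hab.ne, hac.ne, hbc.ne, hab.ne', hac.ne', hbc.ne', Fin.ext_iff]

/-- In a connected non-complete `(2K₂, C₃, C₄)`-free graph, every minimal vertex separator
is an independent set. -/
theorem minSeparator_independent {V : Type*} (G : SimpleGraph V)
    (hconn : G.Connected) (hnc : ∃ u v : V, u ≠ v ∧ ¬ G.Adj u v)
    (h2k2 : TwoK2Free G) (hc3 : NoInducedCycle 3 G) (hc4 : NoInducedCycle 4 G)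
    (S : Set V) (hS : IsMinSeparator G S) :
    ∀ u ∈ S, ∀ v ∈ S, ¬ G.Adj u v := by
  intro u hu v hv hadj
  obtain ⟨⟨hSuniv, hdisc⟩, hmin⟩ := hS
  obtain ⟨a, ha⟩ := Set.ne_univ_iff_exists_notMem S |>.mp hSuniv
  haveI hne : Nonempty ↥(Sᶜ) := ⟨⟨a, ha⟩⟩
  have hpre : ¬ (G.induce (Sᶜ : Set V)).Preconnected := fun h => hdisc ⟨h⟩
  rw [SimpleGraph.Preconnected] at hpre
  push_neg at hpre
  obtain ⟨x, y, hxy⟩ := hpre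
  have hAR : ∀ a b : ↥(Sᶜ), G.Adj ↑a ↑b → (G.induce (Sᶜ : Set V)).Reachable a b :=
    fun a b h => SimpleGraph.Adj.reachable h
  have hmin' : ∀ S' : Set V, S' ⊂ S →
      ¬ (S' ≠ Set.univ ∧ ¬ (G.induce (S'ᶜ : Set V)).Connected) := hmin
  have key : (∀ p : ↥(Sᶜ), ¬ (G.induce (Sᶜ : Set V)).Adj x p) ∨
      (∀ p : ↥(Sᶜ), ¬ (G.induce (Sᶜ : Set V)).Adj y p) := by
    by_contra h
    push_neg at h
    obtain ⟨⟨p, hp⟩, ⟨q, hq⟩⟩ := h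
    have hp' : G.Adj ↑x ↑p := hp
    have hq' : G.Adj ↑y ↑q := hq
    have hRxp : (G.induce (Sᶜ : Set V)).Reachable x p := hp.reachable
    have hRyq : (G.induce (Sᶜ : Set V)).Reachable y q := hq.reachable
    apply h2k2
    refine ⟨↑x, ↑p, ↑y, ↑q, hp'.ne, ?_, ?_, ?_, ?_, hq'.ne, hp', hq', ?_, ?_, ?_, ?_⟩
    · intro h; exact hxy (by rw [Subtype.ext h])
    · intro h; exact hxy (by rw [Subtype.ext h]; exact hRyq.symm)
    · intro h; exact hxy (by rw [← Subtype.ext h]; exact hRxp)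
    · intro h; exact hxy (hRxp.trans (by rw [Subtype.ext h]; exact hRyq.symm))
    · intro h; exact hxy (hAR _ _ h)
    · intro h; exact hxy ((hAR _ _ h).trans hRyq.symm)
    · intro h; exact hxy (hRxp.trans (hAR _ _ h))
    · intro h; exact hxy (hRxp.trans ((hAR _ _ h).trans hRyq.symm))
  rcases key with hx | hy
  · have h1 : G.Adj ↑x u := adj_of_minsep G S hmin' hu x y hxy hx
    have h2 : G.Adj ↑x v := adj_of_minsep G S hmin' hv x y hxy hx
    exact hc3 (triangle_emb h1 h2 hadj)
  · have hyx : ¬ (G.induce (Sᶜ : Set V)).Reachable y x := fun h => hxy h.symm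
    have h1 : G.Adj ↑y u := adj_of_minsep G S hmin' hu y x hyx hy
    have h2 : G.Adj ↑y v := adj_of_minsep G S hmin' hv y x hyx hy
    exact hc3 (triangle_emb h1 h2 hadj)
end

section
/- Let G be a connected non-complete simple graph that is 2K2-free, C3-free and C4-free, and let S be any minimal vertex separator of G with |S| > 1. Then G − S has exactly one trivial component, i.e., exactly one connected component of G − S consists of a single vertex. -/
open SimpleGraph

lemma nonempty_c3 {V : Type*} (G : SimpleGraph V) {a b c : V}
    (hab : G.Adj a b) (hbc : G.Adj b c) (hca : G.Adj c a) :
    Nonempty (cycleGraph 3 ↪g G) := by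
  have h1 : a ≠ b := hab.ne
  have h2 : b ≠ c := hbc.ne
  have h3 : a ≠ c := hca.ne'
  refine ⟨⟨⟨![a, b, c], ?_⟩, ?_⟩⟩
  · intro i j hij
    fin_cases i <;> fin_cases j <;> simp_all
  · intro i j
    change G.Adj (![a, b, c] i) (![a, b, c] j) ↔ (cycleGraph 3).Adj i j
    fin_cases i <;> fin_cases j <;>
      simp [Function.Embedding.coeFn_mk, cycleGraph_three_eq_top, hab, hab.symm, hbc, hbc.symm, hca, hca.symm]

lemma nonempty_c4 {V : Type*} (G : SimpleGraph V) {a b c d : V}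
    (hab : G.Adj a b) (hbc : G.Adj b c) (hcd : G.Adj c d) (hda : G.Adj d a)
    (hac : ¬ G.Adj a c) (hbd : ¬ G.Adj b d) (hac' : a ≠ c) (hbd' : b ≠ d) :
    Nonempty (cycleGraph 4 ↪g G) := by
  have h1 : a ≠ b := hab.ne
  have h2 : b ≠ c := hbc.ne
  have h3 : c ≠ d := hcd.ne
  have h4 : d ≠ a := hda.ne
  have hca : ¬ G.Adj c a := fun h => hac (G.adj_symm h)
  have hdb : ¬ G.Adj d b := fun h => hbd (G.adj_symm h)
  refine ⟨⟨⟨![a, b, c, d], ?_⟩, ?_⟩⟩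
  · intro i j hij
    fin_cases i <;> fin_cases j <;> simp_all
  · intro i j
    change G.Adj (![a, b, c, d] i) (![a, b, c, d] j) ↔ (cycleGraph 4).Adj i j
    fin_cases i <;> fin_cases j <;>
      simp [Function.Embedding.coeFn_mk, cycleGraph_adj, hab, hab.symm, hbc, hbc.symm, hcd, hcd.symm, hda, hda.symm,
        hac, hca, hbd, hdb] <;> decide


lemma walk_aux {V : Type*} (G : SimpleGraph V) (S : Set V) (s : V) (hsS : s ∈ S)
    {a b : ↥((S \ {s})ᶜ : Set V)} (p : (G.induce ((S \ {s})ᶜ : Set V)).Walk a b)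
    (hb : (b : V) = s) :
    ∀ ha : (a : V) ∈ (Sᶜ : Set V),
      ∃ w : ↥(Sᶜ : Set V), (G.induce (Sᶜ : Set V)).Reachable ⟨a, ha⟩ w ∧ G.Adj s ↑w := by
  induction p with
  | nil => intro ha; rw [hb] at ha; exact absurd hsS ha
  | @cons a c b h q ih =>
    intro ha
    by_cases hc : (c : V) = s
    · refine ⟨⟨a, ha⟩, Reachable.refl _, ?_⟩
      have : G.Adj (a : V) (c : V) := h
      rw [hc] at this
      exact this.symm
    · have hcS : (c : V) ∈ (Sᶜ : Set V) := by
        have := c.2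
        simp only [Set.mem_compl_iff, Set.mem_diff, not_and, not_not] at this
        intro hcs
        exact hc (this hcs)
      obtain ⟨w, hw, hadj⟩ := ih hb hcS
      have hadj2 : (G.induce (Sᶜ : Set V)).Adj ⟨a, ha⟩ ⟨c, hcS⟩ := h
      exact ⟨w, hadj2.reachable.trans hw, hadj⟩

lemma sep_adj {V : Type*} (G : SimpleGraph V) (S : Set V)
    (hS : IsMinSeparator G S) (s : V) (hsS : s ∈ S) (u : ↥(Sᶜ : Set V)) :
    ∃ w : ↥(Sᶜ : Set V), (G.induce (Sᶜ : Set V)).Reachable u w ∧ G.Adj s ↑w := by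
  set S' : Set V := S \ {s} with hS'
  have hsub : S' ⊂ S := Set.sdiff_singleton_ssubset.2 hsS
  have hnot := hS.2 S' hsub
  unfold IsSeparator at hnot
  push_neg at hnot
  have hne : S' ≠ Set.univ := by
    intro h
    have : s ∈ S' := h ▸ Set.mem_univ s
    exact this.2 rfl
  have hconn := hnot hne
  have hus : (u : V) ∈ (S'ᶜ : Set V) := fun h => u.2 h.1
  have hss : s ∈ (S'ᶜ : Set V) := fun h => h.2 rfl
  obtain ⟨p⟩ := hconn.preconnected ⟨u, hus⟩ ⟨s, hss⟩
  obtain ⟨w, hw, hadj⟩ := walk_aux G S s hsS p rfl u.2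
  exact ⟨w, hw, hadj⟩

lemma comp_trivial_or_edge {α : Type*} (H : SimpleGraph α) (C : H.ConnectedComponent) :
    (∃ v, C.supp = {v}) ∨ ∃ a b, a ∈ C.supp ∧ b ∈ C.supp ∧ H.Adj a b := by
  obtain ⟨u, hu⟩ := C.exists_rep
  by_cases hall : ∀ v ∈ C.supp, v = u
  · left
    refine ⟨u, Set.eq_singleton_iff_unique_mem.2 ⟨?_, hall⟩⟩
    exact hu
  · right
    push_neg at hall
    obtain ⟨v, hv, hvu⟩ := hall
    have hr : H.Reachable v u := by
      rw [ConnectedComponent.mem_supp_iff] at hv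
      exact ConnectedComponent.exact (hv.trans hu.symm)
    obtain ⟨p⟩ := hr
    cases p with
    | nil => exact absurd rfl hvu
    | @cons _ b _ h q =>
      refine ⟨v, b, hv, ?_, h⟩
      rw [ConnectedComponent.mem_supp_iff] at hv ⊢
      rw [← hv]
      exact (ConnectedComponent.sound h.reachable).symm

/-- In a connected non-complete `(2K₂, C₃, C₄)`-free graph, if a minimal vertex separator
`S` has more than one vertex, then `G − S` has exactly one trivial component. -/
theorem exactlyOne_trivial_component {V : Type*} [Fintype V] (G : SimpleGraph V)
    (hconn : G.Connected) (hnc : ∃ u v : V, u ≠ v ∧ ¬ G.Adj u v)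
    (h2k2 : TwoK2Free G) (hc3 : NoInducedCycle 3 G) (hc4 : NoInducedCycle 4 G)
    (S : Set V) (hS : IsMinSeparator G S) (hcard : 1 < S.ncard) :
    ∃! C : (G.induce (Sᶜ : Set V)).ConnectedComponent, IsTrivialComp C := by
  set H := G.induce (Sᶜ : Set V) with hH
  -- Sᶜ is nonempty
  obtain ⟨z, hz⟩ := Set.ne_univ_iff_exists_notMem S |>.1 hS.1.1
  have hne : Nonempty ↥(Sᶜ : Set V) := ⟨⟨z, hz⟩⟩
  -- two distinct components
  have hdis := hS.1.2
  rw [connected_iff] at hdis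
  push_neg at hdis
  have hp : ¬ H.Preconnected := fun hp => (hdis hp).false hne.some
  unfold SimpleGraph.Preconnected at hp
  push_neg at hp
  obtain ⟨u, v, hnr⟩ := hp
  have hC1C2 : H.connectedComponentMk u ≠ H.connectedComponentMk v := by
    intro h
    exact hnr (ConnectedComponent.exact h)
  -- cross-component vertices: distinct and non-adjacent in G
  have hdiff : ∀ (x y : ↥(Sᶜ : Set V)) (Cx Cy : H.ConnectedComponent),
      x ∈ Cx.supp → y ∈ Cy.supp → Cx ≠ Cy → (x : V) ≠ (y : V) ∧ ¬ G.Adj ↑x ↑y := by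
    intro x y Cx Cy hx hy hne'
    rw [ConnectedComponent.mem_supp_iff] at hx hy
    constructor
    · intro h
      exact hne' (hx ▸ hy ▸ (congrArg H.connectedComponentMk (Subtype.coe_injective h)))
    · intro h
      have hadj : H.Adj x y := by simp [hH, h]
      exact hne' (hx ▸ hy ▸ ConnectedComponent.sound hadj.reachable)
  -- at most one nontrivial component
  have key : ∀ C D : H.ConnectedComponent, C ≠ D → IsTrivialComp C ∨ IsTrivialComp D := by
    intro C D hCD
    by_contra hcon
    push_neg at hcon
    obtain ⟨a, b, haC, hbC, hab⟩ := (comp_trivial_or_edge H C).resolve_left hcon.1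
    obtain ⟨c, d, hcD, hdD, hcd⟩ := (comp_trivial_or_edge H D).resolve_left hcon.2
    have hab' : G.Adj ↑a ↑b := hab
    have hcd' : G.Adj ↑c ↑d := hcd
    obtain ⟨hac, hac'⟩ := hdiff a c C D haC hcD hCD
    obtain ⟨had, had'⟩ := hdiff a d C D haC hdD hCD
    obtain ⟨hbc, hbc'⟩ := hdiff b c C D hbC hcD hCD
    obtain ⟨hbd, hbd'⟩ := hdiff b d C D hbC hdD hCD
    exact h2k2 ⟨↑a, ↑b, ↑c, ↑d, hab'.ne, hac, had, hbc, hbd, hcd'.ne,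
      hab', hcd', hac', had', hbc', hbd'⟩
  -- each s ∈ S is adjacent to the vertex of a trivial component
  have sadj : ∀ s ∈ S, ∀ (C : H.ConnectedComponent) (x : ↥(Sᶜ : Set V)),
      C.supp = {x} → G.Adj s ↑x := by
    intro s hsS C x hx
    obtain ⟨w, hr, hadj⟩ := sep_adj G S hS s hsS x
    have hxC : x ∈ C.supp := hx ▸ rfl
    have hwC : w ∈ C.supp := by
      rw [ConnectedComponent.mem_supp_iff] at hxC ⊢
      rw [← hxC]
      exact (ConnectedComponent.sound hr).symm
    rw [hx, Set.mem_singleton_iff] at hwC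
    rw [hwC] at hadj
    exact hadj
  -- uniqueness of trivial components
  have uniq : ∀ C D : H.ConnectedComponent, IsTrivialComp C → IsTrivialComp D → C = D := by
    intro C D ⟨x, hx⟩ ⟨y, hy⟩
    by_contra hCD
    have hxC : x ∈ C.supp := hx ▸ rfl
    have hyD : y ∈ D.supp := hy ▸ rfl
    obtain ⟨hxy, hxy'⟩ := hdiff x y C D hxC hyD hCD
    obtain ⟨s, hsS, t, htS, hst⟩ := (Set.one_lt_ncard (Set.toFinite S)).1 hcard
    have hsx : G.Adj s ↑x := sadj s hsS C x hx
    have htx : G.Adj t ↑x := sadj t htS C x hx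
    have hsy : G.Adj s ↑y := sadj s hsS D y hy
    have hty : G.Adj t ↑y := sadj t htS D y hy
    by_cases hst' : G.Adj s t
    · exact hc3 (nonempty_c3 G hst' htx hsx.symm)
    · exact hc4 (nonempty_c4 G hsx htx.symm hty hsy.symm hst' hxy' hst hxy)
  obtain htr | htr := key _ _ hC1C2
  · exact ⟨_, htr, fun D hD => uniq D _ hD htr⟩
  · exact ⟨_, htr, fun D hD => uniq D _ hD htr⟩
end

section
/- Let G be a connected non-complete simple graph that is 2K2-free, C3-free and C4-free, let S be any minimal vertex separator of G, and let G1 be a non-trivial connected component of G − S. Then for every edge {u,v} of G1, the sets N_G(u) ∩ S and N_G(v) ∩ S are disjoint and their union equals S; equivalently, every vertex of S is adjacent to exactly one of u and v. -/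
open SimpleGraph

/-- A triangle yields an induced `C₃`. -/
lemma triangle_to_c3 {V : Type*} (G : SimpleGraph V) (a b c : V)
    (hab : G.Adj a b) (hbc : G.Adj b c) (hca : G.Adj c a) :
    Nonempty (cycleGraph 3 ↪g G) := by
  refine ⟨⟨⟨![a, b, c], ?_⟩, ?_⟩⟩
  · intro i j hij
    fin_cases i <;> fin_cases j <;> simp_all
  · intro i j
    rw [cycleGraph_three_eq_top, top_adj]
    change G.Adj (![a, b, c] i) (![a, b, c] j) ↔ i ≠ j
    fin_cases i <;> fin_cases j <;>
      simp_all [G.ne_of_adj, hab.symm, hbc.symm, hca.symm, (G.ne_of_adj hab).symm,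
        (G.ne_of_adj hbc).symm, (G.ne_of_adj hca).symm, G.irrefl]

/-- In a connected non-complete `(2K₂, C₃, C₄)`-free graph with minimal vertex separator `S`
and non-trivial component `G₁` of `G − S`: for every edge `{u,v}` of `G₁`, the sets
`N(u) ∩ S` and `N(v) ∩ S` are disjoint and their union is `S`. -/
theorem edge_neighborhoods_partition_separator {V : Type*} (G : SimpleGraph V)
    (hconn : G.Connected) (hnc : ∃ u v : V, u ≠ v ∧ ¬ G.Adj u v)
    (h2k2 : TwoK2Free G) (hc3 : NoInducedCycle 3 G) (hc4 : NoInducedCycle 4 G)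
    (S : Set V) (hS : IsMinSeparator G S)
    (G1 : (G.induce (Sᶜ : Set V)).ConnectedComponent) (hG1 : ¬ IsTrivialComp G1) :
    ∀ u v : (Sᶜ : Set V), u ∈ G1.supp → v ∈ G1.supp →
      (G.induce (Sᶜ : Set V)).Adj u v →
      (G.neighborSet (u : V) ∩ S) ∩ (G.neighborSet (v : V) ∩ S) = ∅ ∧
      (G.neighborSet (u : V) ∩ S) ∪ (G.neighborSet (v : V) ∩ S) = S := by
  intro u v hu hv huv
  have hadjG : G.Adj (u : V) (v : V) := huv
  set H := G.induce (Sᶜ : Set V) with hH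
  have huvH : H.Reachable u v := by
    rw [SimpleGraph.ConnectedComponent.mem_supp_iff] at hu hv
    exact SimpleGraph.ConnectedComponent.exact (hu.trans hv.symm)
  constructor
  · ext s
    simp only [Set.mem_inter_iff, Set.mem_empty_iff_false, iff_false, not_and,
      SimpleGraph.mem_neighborSet, and_imp]
    intro hus hsS hvs _
    exact hc3 (triangle_to_c3 G (u : V) (v : V) s hadjG hvs hus.symm)
  · apply Set.Subset.antisymm
    · rintro s (⟨-, hsS⟩ | ⟨-, hsS⟩) <;> exact hsS
    intro s hsS
    by_contra hcon
    simp only [Set.mem_union, Set.mem_inter_iff, SimpleGraph.mem_neighborSet, not_or,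
      not_and] at hcon
    have hus : ¬ G.Adj (u : V) s := fun h => hcon.1 h hsS
    have hvs : ¬ G.Adj (v : V) s := fun h => hcon.2 h hsS
    -- G minus (S \ {s}) is connected, by minimality of S
    have hssub : S \ {s} ⊂ S := by
      rw [Set.ssubset_def]
      exact ⟨Set.diff_subset, fun h => (h hsS).2 rfl⟩
    obtain ⟨w0, hw0⟩ := Set.ne_univ_iff_exists_notMem S |>.mp hS.1.1
    have hconn' : (G.induce ((S \ {s})ᶜ : Set V)).Connected := by
      have hns := hS.2 (S \ {s}) hssub
      rw [IsSeparator, not_and] at hns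
      have : S \ {s} ≠ Set.univ := by
        intro h
        exact hw0 ((h ▸ Set.mem_univ w0).1)
      exact not_not.mp (hns this)
    -- find b in Sᶜ not H-reachable from u
    have hdisc : ¬ H.Connected := hS.1.2
    have hnp : ¬ H.Preconnected := fun hp => hdisc { preconnected := hp, nonempty := ⟨u⟩ }
    rw [SimpleGraph.Preconnected] at hnp
    push_neg at hnp
    obtain ⟨x, y, hxy⟩ := hnp
    have hb : ∃ b : (Sᶜ : Set V), ¬ H.Reachable u b := by
      by_cases h1 : H.Reachable u x
      · exact ⟨y, fun h2 => hxy (h1.symm.trans h2)⟩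
      · exact ⟨x, h1⟩
    obtain ⟨b, hb⟩ := hb
    -- walk from b to u in G minus (S \ {s})
    have hbT : (b : V) ∈ ((S \ {s})ᶜ : Set V) := fun h => b.2 h.1
    have huT : (u : V) ∈ ((S \ {s})ᶜ : Set V) := fun h => u.2 h.1
    obtain ⟨w⟩ := hconn'.preconnected ⟨(b : V), hbT⟩ ⟨(u : V), huT⟩
    -- key: extract a neighbor of s reachable from b within Sᶜ
    have key : ∀ (x t : ((S \ {s})ᶜ : Set V))
        (_ : (G.induce ((S \ {s})ᶜ : Set V)).Walk x t), (t : V) = (u : V) →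
        (∃ (hx : (x : V) ∈ (Sᶜ : Set V)), H.Reachable b ⟨(x : V), hx⟩) →
        ∃ z, (∃ (hz : z ∈ (Sᶜ : Set V)), H.Reachable b ⟨z, hz⟩) ∧ G.Adj s z := by
      intro x t w
      induction w with
      | nil =>
        rintro ht ⟨hx, hr⟩
        have heq : (⟨_, hx⟩ : (Sᶜ : Set V)) = u := Subtype.ext ht
        rw [heq] at hr
        exact absurd hr (fun h => hb h.symm)
      | @cons x c _ h p ih =>
        rintro ht ⟨hx, hr⟩
        have hadj : G.Adj (x : V) (c : V) := h
        by_cases hc : (c : V) = s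
        · exact ⟨(x : V), ⟨hx, hr⟩, by rw [hc] at hadj; exact hadj.symm⟩
        · have hcS : (c : V) ∈ (Sᶜ : Set V) := by
            intro hmem
            exact c.2 ⟨hmem, hc⟩
          have hstep : H.Adj ⟨(x : V), hx⟩ ⟨(c : V), hcS⟩ := by
            simp only [hH, SimpleGraph.comap_adj, Function.Embedding.coe_subtype]
            exact hadj
          exact ih ht ⟨hcS, hr.trans hstep.reachable⟩
    obtain ⟨z, ⟨hzS, hzr⟩, hsz⟩ := key _ _ w rfl ⟨b.2, by exact SimpleGraph.Reachable.refl _⟩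
    -- z is in a different component from u, v
    have hzu : ¬ H.Reachable ⟨z, hzS⟩ u := fun h => hb (h.symm.trans hzr.symm)
    have hne_uz : (u : V) ≠ z := fun h => hzu (by
      have : (⟨z, hzS⟩ : (Sᶜ : Set V)) = u := Subtype.ext h.symm
      rw [this])

    have hne_vz : (v : V) ≠ z := fun h => hzu (by
      have : (⟨z, hzS⟩ : (Sᶜ : Set V)) = v := Subtype.ext h.symm
      rw [this]
      exact huvH.symm)
    have hnadj_uz : ¬ G.Adj (u : V) z := by
      intro hadj
      apply hzu
      have : H.Adj ⟨z, hzS⟩ u := by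
        simp only [hH, SimpleGraph.comap_adj, Function.Embedding.coe_subtype]
        exact hadj.symm
      exact this.reachable
    have hnadj_vz : ¬ G.Adj (v : V) z := by
      intro hadj
      apply hzu
      have : H.Adj ⟨z, hzS⟩ v := by
        simp only [hH, SimpleGraph.comap_adj, Function.Embedding.coe_subtype]
        exact hadj.symm
      exact this.reachable.trans huvH.symm
    have hsne : s ≠ z := fun h => hzS (h ▸ hsS)
    exact h2k2 ⟨(u : V), (v : V), s, z, hadjG.ne,
      fun h => u.2 (h ▸ hsS), hne_uz,
      fun h => v.2 (h ▸ hsS), hne_vz, hsne,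
      hadjG, hsz, hus, hnadj_uz, hvs, hnadj_vz⟩
end

section
/- Let G be a connected non-complete simple graph that is 2K2-free, C3-free and C5-free, let S be any minimal vertex separator of G, and let G1 be a non-trivial connected component of G − S. Then for every edge {u,v} of G1, one of the two endpoints is adjacent to every vertex of S and the other endpoint is adjacent to no vertex of S. -/
open SimpleGraph

lemma tfree_aux {V : Type*} {G : SimpleGraph V} (h : NoInducedCycle 3 G) :
    ∀ a b c : V, G.Adj a b → G.Adj b c → G.Adj a c → False := by
  intro a b c hab hbc hac
  have h1 := hab.ne; have h2 := hbc.ne; have h3 := hac.ne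
  have hba := hab.symm; have hcb := hbc.symm; have hca := hac.symm
  apply h
  refine ⟨⟨![a,b,c], ?_⟩, ?_⟩
  · intro i j hij
    fin_cases i <;> fin_cases j <;> simp_all
  · intro i j
    change G.Adj (![a,b,c] i) (![a,b,c] j) ↔ (cycleGraph 3).Adj i j
    fin_cases i <;> fin_cases j <;> simp_all [cycleGraph_adj] <;> decide

lemma c5free_aux {V : Type*} {G : SimpleGraph V} (h : NoInducedCycle 5 G)
    (a b c d e : V)
    (nac : a ≠ c) (nad : a ≠ d) (nbd : b ≠ d) (nbe : b ≠ e) (nce : c ≠ e)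
    (hab : G.Adj a b) (hbc : G.Adj b c) (hcd : G.Adj c d) (hde : G.Adj d e)
    (hea : G.Adj e a)
    (mac : ¬ G.Adj a c) (mad : ¬ G.Adj a d) (mbd : ¬ G.Adj b d)
    (mbe : ¬ G.Adj b e) (mce : ¬ G.Adj c e) : False := by
  have h1 := hab.ne; have h2 := hbc.ne; have h3 := hcd.ne
  have h4 := hde.ne; have h5 := hea.ne
  have s1 := hab.symm; have s2 := hbc.symm; have s3 := hcd.symm
  have s4 := hde.symm; have s5 := hea.symm
  have m1 : ¬ G.Adj c a := fun h' => mac h'.symm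
  have m2 : ¬ G.Adj d a := fun h' => mad h'.symm
  have m3 : ¬ G.Adj d b := fun h' => mbd h'.symm
  have m4 : ¬ G.Adj e b := fun h' => mbe h'.symm
  have m5 : ¬ G.Adj e c := fun h' => mce h'.symm
  apply h
  refine ⟨⟨![a,b,c,d,e], ?_⟩, ?_⟩
  · intro i j hij
    fin_cases i <;> fin_cases j <;> simp_all
  · intro i j
    change G.Adj (![a,b,c,d,e] i) (![a,b,c,d,e] j) ↔ (cycleGraph 5).Adj i j
    fin_cases i <;> fin_cases j <;> simp_all [cycleGraph_adj] <;> decide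

/-- In a connected non-complete `(2K₂, C₃, C₅)`-free graph with minimal vertex separator `S`
and non-trivial component `G₁` of `G − S`: for every edge `{u,v}` of `G₁`, one endpoint is
adjacent to every vertex of `S` and the other is adjacent to none. -/
theorem edge_endpoints_universal_or_isolated {V : Type*} (G : SimpleGraph V)
    (hconn : G.Connected) (hnc : ∃ u v : V, u ≠ v ∧ ¬ G.Adj u v)
    (h2k2 : TwoK2Free G) (hc3 : NoInducedCycle 3 G) (hc5 : NoInducedCycle 5 G)
    (S : Set V) (hS : IsMinSeparator G S)
    (G1 : (G.induce (Sᶜ : Set V)).ConnectedComponent) (hG1 : ¬ IsTrivialComp G1) :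
    ∀ u v : (Sᶜ : Set V), u ∈ G1.supp → v ∈ G1.supp →
      (G.induce (Sᶜ : Set V)).Adj u v →
      ((∀ s ∈ S, G.Adj (u : V) s) ∧ (∀ s ∈ S, ¬ G.Adj (v : V) s)) ∨
      ((∀ s ∈ S, G.Adj (v : V) s) ∧ (∀ s ∈ S, ¬ G.Adj (u : V) s)) := by
  obtain ⟨⟨hSuniv, hSdisc⟩, hmin⟩ := hS
  have htf := tfree_aux hc3
  intro u v hu hv huv
  have hu' : (G.induce (Sᶜ : Set V)).connectedComponentMk u = G1 :=
    (ConnectedComponent.mem_supp_iff _ _).mp hu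
  have hv' : (G.induce (Sᶜ : Set V)).connectedComponentMk v = G1 :=
    (ConnectedComponent.mem_supp_iff _ _).mp hv
  have huvG : G.Adj (u : V) (v : V) := by simpa using huv
  -- different components are non-adjacent
  have hdiff : ∀ p q : (Sᶜ : Set V),
      (G.induce (Sᶜ : Set V)).connectedComponentMk p ≠
        (G.induce (Sᶜ : Set V)).connectedComponentMk q → ¬ G.Adj (p : V) (q : V) := by
    intro p q hne hadj
    exact hne (ConnectedComponent.connectedComponentMk_eq_of_adj (by simpa using hadj))
  have hdiffne : ∀ p q : (Sᶜ : Set V),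
      (G.induce (Sᶜ : Set V)).connectedComponentMk p ≠
        (G.induce (Sᶜ : Set V)).connectedComponentMk q → (p : V) ≠ (q : V) := by
    intro p q hne h
    exact hne (by rw [Subtype.ext h])
  -- every vertex of S has a neighbor in every component of G − S
  have hnbr : ∀ s ∈ S, ∀ C : (G.induce (Sᶜ : Set V)).ConnectedComponent,
      ∃ x : (Sᶜ : Set V), (G.induce (Sᶜ : Set V)).connectedComponentMk x = C ∧
        G.Adj s (x : V) := by
    intro s hs C
    by_contra hnone
    push_neg at hnone
    refine hmin (S \ {s}) (Set.sdiff_singleton_ssubset.mpr hs) ⟨?_, ?_⟩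
    · exact (Set.ne_univ_iff_exists_notMem _).mpr ⟨s, by simp⟩
    · intro hcon
      obtain ⟨c, hc⟩ := C.exists_rep
      have key : ∀ (x y : ((S \ {s})ᶜ : Set V))
          (p : (G.induce ((S \ {s})ᶜ : Set V)).Walk x y),
          (∃ hx : (x : V) ∈ (Sᶜ : Set V),
            (G.induce (Sᶜ : Set V)).connectedComponentMk ⟨(x : V), hx⟩ = C) →
          (∃ hy : (y : V) ∈ (Sᶜ : Set V),
            (G.induce (Sᶜ : Set V)).connectedComponentMk ⟨(y : V), hy⟩ = C) := by
        intro x y p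
        induction p with
        | nil => exact id
        | @cons a b c' h p ih =>
          rintro ⟨ha, hC⟩
          have hGab : G.Adj (a : V) (b : V) := by simpa using h
          have hbS : (b : V) ∈ (Sᶜ : Set V) := by
            by_contra hbS
            have hbs : (b : V) = s := by
              have hb2 := b.2
              simp only [Set.mem_compl_iff, Set.mem_diff, Set.mem_singleton_iff,
                not_and, not_not] at hb2
              simp only [Set.mem_compl_iff, not_not] at hbS
              exact hb2 hbS
            have hsa : G.Adj s (a : V) := by have h' := hGab.symm; rwa [hbs] at h'
            exact hnone ⟨(a : V), ha⟩ hC hsa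
          apply ih
          refine ⟨hbS, ?_⟩
          have hadj2 : (G.induce (Sᶜ : Set V)).Adj ⟨(a : V), ha⟩ ⟨(b : V), hbS⟩ := by
            simpa using hGab
          exact (ConnectedComponent.connectedComponentMk_eq_of_adj hadj2).symm.trans hC
      have hsT : s ∈ ((S \ {s})ᶜ : Set V) := by simp
      have hcT : (c : V) ∈ ((S \ {s})ᶜ : Set V) := fun h => c.2 h.1
      obtain ⟨p⟩ := hcon.preconnected ⟨(c : V), hcT⟩ ⟨s, hsT⟩
      obtain ⟨hsS', -⟩ := key _ _ p ⟨c.2, hc⟩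
      exact hsS' hs
  -- there is a component C2 different from G1
  obtain ⟨C2, hC2ne⟩ : ∃ C2 : (G.induce (Sᶜ : Set V)).ConnectedComponent, C2 ≠ G1 := by
    haveI : Nonempty (Sᶜ : Set V) := ⟨u⟩
    have hpre : ¬ (G.induce (Sᶜ : Set V)).Preconnected := fun h => hSdisc (Connected.mk h)
    rw [Preconnected] at hpre
    push_neg at hpre
    obtain ⟨a, b, hab⟩ := hpre
    by_cases hA : (G.induce (Sᶜ : Set V)).connectedComponentMk a = G1
    · refine ⟨(G.induce (Sᶜ : Set V)).connectedComponentMk b, fun h => ?_⟩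
      exact hab (ConnectedComponent.eq.mp (hA.trans h.symm))
    · exact ⟨_, hA⟩
  -- there is no edge inside C2 (2K₂-freeness)
  have hnoedge : ∀ p q : (Sᶜ : Set V),
      (G.induce (Sᶜ : Set V)).connectedComponentMk p = C2 →
      ¬ (G.induce (Sᶜ : Set V)).Adj p q := by
    intro p q hp hpq
    have hq : (G.induce (Sᶜ : Set V)).connectedComponentMk q = C2 :=
      (ConnectedComponent.connectedComponentMk_eq_of_adj hpq).symm.trans hp
    have hpG : G.Adj (p : V) (q : V) := by simpa using hpq
    have hup : (G.induce (Sᶜ : Set V)).connectedComponentMk u ≠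
        (G.induce (Sᶜ : Set V)).connectedComponentMk p := by
      rw [hu', hp]; exact fun h => hC2ne h.symm
    have huq : (G.induce (Sᶜ : Set V)).connectedComponentMk u ≠
        (G.induce (Sᶜ : Set V)).connectedComponentMk q := by
      rw [hu', hq]; exact fun h => hC2ne h.symm
    have hvp : (G.induce (Sᶜ : Set V)).connectedComponentMk v ≠
        (G.induce (Sᶜ : Set V)).connectedComponentMk p := by
      rw [hv', hp]; exact fun h => hC2ne h.symm
    have hvq : (G.induce (Sᶜ : Set V)).connectedComponentMk v ≠
        (G.induce (Sᶜ : Set V)).connectedComponentMk q := by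
      rw [hv', hq]; exact fun h => hC2ne h.symm
    exact h2k2 ⟨u, v, p, q, huvG.ne, hdiffne u p hup, hdiffne u q huq,
      hdiffne v p hvp, hdiffne v q hvq, hpG.ne, huvG, hpG,
      hdiff u p hup, hdiff u q huq, hdiff v p hvp, hdiff v q hvq⟩
  -- C2 is a single vertex w
  obtain ⟨w, hw0⟩ := C2.exists_rep
  have hw : (G.induce (Sᶜ : Set V)).connectedComponentMk w = C2 := hw0
  have hsupp : ∀ y : (Sᶜ : Set V),
      (G.induce (Sᶜ : Set V)).connectedComponentMk y = C2 → y = w := by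
    intro y hy
    have hr : (G.induce (Sᶜ : Set V)).Reachable w y :=
      ConnectedComponent.eq.mp (hw.trans hy.symm)
    obtain ⟨p⟩ := hr
    cases p with
    | nil => rfl
    | cons h q => exact absurd h (hnoedge _ _ hw)
  -- every vertex of S is adjacent to w
  have hsw : ∀ s ∈ S, G.Adj s (w : V) := by
    intro s hs
    obtain ⟨x, hxC, hsx⟩ := hnbr s hs C2
    rwa [hsupp x hxC] at hsx
  -- u, v are not adjacent to (and distinct from) w
  have huwC : (G.induce (Sᶜ : Set V)).connectedComponentMk u ≠
      (G.induce (Sᶜ : Set V)).connectedComponentMk w := by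
    rw [hu', hw]; exact fun h => hC2ne h.symm
  have hvwC : (G.induce (Sᶜ : Set V)).connectedComponentMk v ≠
      (G.induce (Sᶜ : Set V)).connectedComponentMk w := by
    rw [hv', hw]; exact fun h => hC2ne h.symm
  have huw := hdiff u w huwC
  have hvw := hdiff v w hvwC
  have huwne := hdiffne u w huwC
  have hvwne := hdiffne v w hvwC
  -- every s ∈ S is adjacent to u or v
  have hcl1 : ∀ s ∈ S, G.Adj (u : V) s ∨ G.Adj (v : V) s := by
    intro s hs
    by_contra hcon
    push_neg at hcon
    obtain ⟨hus, hvs⟩ := hcon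
    have husne : (u : V) ≠ s := fun h => u.2 (h ▸ hs)
    have hvsne : (v : V) ≠ s := fun h => v.2 (h ▸ hs)
    have hswne : s ≠ (w : V) := fun h => w.2 (h ▸ hs)
    exact h2k2 ⟨u, v, s, w, huvG.ne, husne, huwne, hvsne, hvwne, hswne,
      huvG, hsw s hs, hus, huw, hvs, hvw⟩
  -- mixing is impossible
  have hmix : ∀ s ∈ S, ∀ t ∈ S, G.Adj (u : V) s → G.Adj (v : V) t → False := by
    intro s hs t ht hus hvt
    have hvs : ¬ G.Adj (v : V) s := fun h => htf _ _ _ huvG h hus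
    have hut : ¬ G.Adj (u : V) t := fun h => htf _ _ _ huvG hvt h
    have hst : ¬ G.Adj s t := fun h => htf s t w h (hsw t ht) (hsw s hs)
    have hutne : (u : V) ≠ t := fun h => u.2 (h ▸ ht)
    have hvsne : (v : V) ≠ s := fun h => v.2 (h ▸ hs)
    have htsne : t ≠ s := fun h => hut (h ▸ hus)
    exact c5free_aux hc5 (u : V) (v : V) t (w : V) s
      hutne huwne hvwne hvsne htsne
      huvG hvt (hsw t ht) (hsw s hs).symm hus.symm
      hut huw hvw hvs (fun h => hst h.symm)
  by_cases hcase : ∃ t ∈ S, G.Adj (v : V) t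
  · obtain ⟨t, ht, hvt⟩ := hcase
    right
    have hnu : ∀ s ∈ S, ¬ G.Adj (u : V) s := fun s hs h => hmix s hs t ht h hvt
    refine ⟨fun s hs => ?_, hnu⟩
    rcases hcl1 s hs with h | h
    · exact absurd h (hnu s hs)
    · exact h
  · push_neg at hcase
    left
    refine ⟨fun s hs => ?_, hcase⟩
    rcases hcl1 s hs with h | h
    · exact h
    · exact absurd h (hcase s hs)
end

section
/- Let G be a connected non-complete simple graph that is 2K2-free, C3-free and C5-free, and let S be a minimal vertex separator of G such that every connected component of G − S is trivial. Let T be the set of vertices forming the trivial components of G − S. Then the minimum cardinality of a feedback vertex set of G equals min{|S| − 1, |T| − 1}. -/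
open SimpleGraph

/-- `F` is a feedback vertex set of `G`: deleting `F` leaves a forest. -/
def IsFVS {V : Type*} (G : SimpleGraph V) (F : Set V) : Prop :=
  (G.induce (Fᶜ : Set V)).IsAcyclic


/-- A graph in which every edge contains a fixed vertex `x` is acyclic. -/
lemma star_acyclic {W : Type*} {H : SimpleGraph W} {x : W}
    (hx : ∀ e ∈ H.edgeSet, x ∈ e) : H.IsAcyclic := by
  classical
  have key : ∀ (c : H.Walk x x), ¬ c.IsCycle := by
    intro c hc
    cases c with
    | nil => simpa using hc.three_le_length
    | cons h1 q =>
      rename_i y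
      cases q with
      | nil => exact H.loopless.irrefl _ h1
      | cons h2 q2 =>
        rename_i z
        have hz : x ∈ s(y, z) := hx _ h2
        rw [Sym2.mem_iff] at hz
        rcases hz with rfl | rfl
        · exact H.loopless.irrefl _ h1
        · cases q2 with
          | nil => simpa using hc.three_le_length
          | cons h3 q3 =>
            have hnd := hc.support_nodup
            simp only [Walk.support_cons, List.tail_cons, List.nodup_cons] at hnd
            exact hnd.2.1 (by simp [Walk.end_mem_support q3])
  intro v c hc
  cases c with
  | nil => simpa using hc.three_le_length
  | cons h1 q =>
    rename_i y
    have he : s(v, y) ∈ (Walk.cons h1 q).edges := by simp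
    have hxe : x ∈ s(v, y) := hx _ ((Walk.cons h1 q).edges_subset_edgeSet he)
    have hxs : x ∈ (Walk.cons h1 q).support := by
      rw [Sym2.mem_iff] at hxe
      rcases hxe with rfl | rfl
      · exact Walk.start_mem_support _
      · rw [Walk.support_cons]
        exact List.mem_cons_of_mem _ q.start_mem_support
    exact key _ (hc.rotate hxs)

lemma c4_not_acyclic {W : Type*} {H : SimpleGraph W} {a b c d : W}
    (hab : H.Adj a b) (hbc : H.Adj b c) (hcd : H.Adj c d) (hda : H.Adj d a)
    (hac : a ≠ c) (hbd : b ≠ d) : ¬ H.IsAcyclic := by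
  intro hA
  have hABne := hab.ne
  have hBCne := hbc.ne
  have hCDne := hcd.ne
  have hDAne := hda.ne
  refine hA (Walk.cons hab (Walk.cons hbc (Walk.cons hcd (Walk.cons hda Walk.nil)))) ?_
  rw [Walk.isCycle_def, Walk.isTrail_def]
  refine ⟨?_, by simp, ?_⟩
  · simp only [Walk.edges_cons, Walk.edges_nil, List.nodup_cons, List.mem_cons,
      List.not_mem_nil, or_false, List.nodup_nil, and_true, List.mem_singleton]
    refine ⟨?_, ?_, ?_⟩ <;> simp [Sym2.eq_iff] <;> tauto
  · simp only [Walk.support_cons, Walk.support_nil, List.tail_cons, List.nodup_cons,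
      List.mem_cons, List.not_mem_nil, or_false, List.nodup_nil, and_true, List.mem_singleton]
    tauto

/-- In a connected non-complete `(2K₂, C₃, C₅)`-free graph with minimal vertex separator `S`
such that all components of `G − S` are trivial, the minimum size of a feedback vertex set
is `min (|S| − 1) (|T| − 1)`, where `T` is the set of vertices of the trivial components. -/
theorem fvs_card_allTrivial {V : Type*} [Fintype V] (G : SimpleGraph V)
    (hconn : G.Connected) (hnc : ∃ u v : V, u ≠ v ∧ ¬ G.Adj u v)
    (h2k2 : TwoK2Free G) (hc3 : NoInducedCycle 3 G) (hc5 : NoInducedCycle 5 G)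
    (S : Set V) (hS : IsMinSeparator G S)
    (htriv : ∀ C : (G.induce (Sᶜ : Set V)).ConnectedComponent, IsTrivialComp C)
    (T : Set V)
    (hT : T = {v : V | ∃ h : v ∈ (Sᶜ : Set V),
      IsTrivialComp ((G.induce (Sᶜ : Set V)).connectedComponentMk ⟨v, h⟩)}) :
    IsLeast {n : ℕ | ∃ F : Set V, IsFVS G F ∧ F.ncard = n}
      (min (S.ncard - 1) (T.ncard - 1)) := by
  classical
  obtain ⟨⟨hSuniv, hSdisc⟩, hSmin⟩ := hS
  -- Sᶜ is independent in G
  have hindep : ∀ a ∈ (Sᶜ : Set V), ∀ b ∈ (Sᶜ : Set V), ¬ G.Adj a b := by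
    intro a ha b hb hab
    obtain ⟨v, hv⟩ := htriv ((G.induce (Sᶜ : Set V)).connectedComponentMk ⟨a, ha⟩)
    have hadj : (G.induce (Sᶜ : Set V)).Adj ⟨a, ha⟩ ⟨b, hb⟩ := by
      simpa using hab
    have h1 : (⟨a, ha⟩ : (Sᶜ : Set V)) ∈
        ((G.induce (Sᶜ : Set V)).connectedComponentMk ⟨a, ha⟩).supp := rfl
    have h2 : (⟨b, hb⟩ : (Sᶜ : Set V)) ∈
        ((G.induce (Sᶜ : Set V)).connectedComponentMk ⟨a, ha⟩).supp :=
      (ConnectedComponent.connectedComponentMk_eq_of_adj hadj).symm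
    rw [hv] at h1 h2
    have : a = b := by
      have e1 : (⟨a, ha⟩ : (Sᶜ : Set V)) = v := h1
      have e2 : (⟨b, hb⟩ : (Sᶜ : Set V)) = v := h2
      rw [← e2] at e1; exact congrArg Subtype.val e1
    exact hab.ne this
  -- T = Sᶜ
  have hTS : T = (Sᶜ : Set V) := by
    subst hT
    ext v
    simp only [Set.mem_setOf_eq]
    exact ⟨fun ⟨h, _⟩ => h, fun h => ⟨h, htriv _⟩⟩
  -- Sᶜ nonempty
  have hScne : (Sᶜ : Set V).Nonempty := Set.nonempty_compl.mpr hSuniv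
  -- S nonempty
  have hSne : S.Nonempty := by
    rcases S.eq_empty_or_nonempty with rfl | h
    · exfalso
      apply hSdisc
      rw [Set.compl_empty]
      exact (induceUnivIso G).symm.connected_iff.mp hconn
    · exact h
  -- every vertex of S is adjacent to every vertex of Sᶜ
  have hcomp : ∀ s ∈ S, ∀ v ∈ (Sᶜ : Set V), G.Adj s v := by
    intro s hs v hv
    have hsub : S \ {s} ⊂ S := Set.sdiff_singleton_ssubset.mpr hs
    have hns := hSmin _ hsub
    rw [IsSeparator, not_and_or] at hns
    have hvmem : v ∈ ((S \ {s})ᶜ : Set V) := by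
      simp only [Set.mem_compl_iff, Set.mem_diff]
      exact fun h => hv h.1
    have hsmem : s ∈ ((S \ {s})ᶜ : Set V) := by simp
    rcases hns with h | hcn
    · rw [not_not] at h
      exact absurd (h ▸ (Set.mem_univ v) : v ∈ S \ {s}) hvmem
    · obtain ⟨p⟩ := (not_not.mp hcn).preconnected ⟨v, hvmem⟩ ⟨s, hsmem⟩
      have hne : (⟨v, hvmem⟩ : ((S \ {s})ᶜ : Set V)) ≠ ⟨s, hsmem⟩ := by
        intro h
        exact hv (by rw [show v = s from congrArg Subtype.val h]; exact hs)
      have hpnil : ¬ p.Nil := Walk.not_nil_of_ne hne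
      have hadj := p.adj_snd hpnil
      set b := p.getVert 1 with hb
      have hGadj : G.Adj v ↑b := by simpa using hadj
      by_cases hbS : (b : V) ∈ (Sᶜ : Set V)
      · exact absurd hGadj (hindep v hv _ hbS)
      · have : (b : V) = s := by
          have := b.2
          simp only [Set.mem_compl_iff, Set.mem_diff, not_and, not_not] at this
          simp only [Set.mem_compl_iff, not_not] at hbS
          exact this hbS
        rw [this] at hGadj
        exact hGadj.symm
  -- S is independent (triangle-freeness)
  have hSind : ∀ a ∈ S, ∀ b ∈ S, ¬ G.Adj a b := by
    intro a ha b hb hab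
    obtain ⟨v, hv⟩ := hScne
    have hav : G.Adj a v := hcomp a ha v hv
    have hbv : G.Adj b v := hcomp b hb v hv
    have hane : a ≠ v := fun h => hv (h ▸ ha)
    have hbne : b ≠ v := fun h => hv (h ▸ hb)
    refine hc3 ⟨⟨⟨![a, b, v], ?_⟩, ?_⟩⟩
    · intro x y hxy
      fin_cases x <;> fin_cases y <;>
        simp_all [Matrix.cons_val_zero, Matrix.cons_val_one] <;>
        first | rfl | exact absurd hxy (by simp_all [hab.ne])
    · intro x y
      change G.Adj (![a, b, v] x) (![a, b, v] y) ↔ _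
      rw [cycleGraph_three_eq_top]
      simp only [Function.Embedding.coeFn_mk, top_adj]
      fin_cases x <;> fin_cases y <;>
        simp [hab, hab.symm, hav, hav.symm, hbv, hbv.symm, hane, hbne, hab.ne,
          hane.symm, hbne.symm, Ne.symm hab.ne]
  rw [hTS]
  constructor
  · -- membership: exhibit an optimal FVS
    by_cases hle : S.ncard ≤ (Sᶜ : Set V).ncard
    · obtain ⟨s0, hs0⟩ := hSne
      refine ⟨S \ {s0}, ?_, ?_⟩
      · have hs0' : s0 ∈ ((S \ {s0})ᶜ : Set V) := by simp
        apply star_acyclic (x := (⟨s0, hs0'⟩ : ((S \ {s0})ᶜ : Set V)))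
        intro e he
        induction e using Sym2.ind with
        | _ u w =>
          rw [mem_edgeSet] at he
          have hG : G.Adj ↑u ↑w := by simpa using he
          by_cases hu : (u : V) ∈ (Sᶜ : Set V)
          · by_cases hw : (w : V) ∈ (Sᶜ : Set V)
            · exact absurd hG (hindep _ hu _ hw)
            · have hwS : (w : V) ∈ S := not_not.mp hw
              have : (w : V) = s0 := by
                have h2 := w.2
                simp only [Set.mem_compl_iff, Set.mem_diff, not_and, not_not] at h2
                exact h2 hwS
              rw [Sym2.mem_iff]
              right
              exact Subtype.ext this.symm
          · have huS : (u : V) ∈ S := not_not.mp hu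
            have : (u : V) = s0 := by
              have h2 := u.2
              simp only [Set.mem_compl_iff, Set.mem_diff, not_and, not_not] at h2
              exact h2 huS
            rw [Sym2.mem_iff]
            left
            exact Subtype.ext this.symm
      · rw [Set.ncard_diff_singleton_of_mem hs0]
        exact (min_eq_left (Nat.sub_le_sub_right hle 1)).symm
    · obtain ⟨t0, ht0⟩ := hScne
      refine ⟨(Sᶜ : Set V) \ {t0}, ?_, ?_⟩
      · have ht0' : t0 ∈ (((Sᶜ : Set V) \ {t0})ᶜ : Set V) := by simp
        apply star_acyclic (x := (⟨t0, ht0'⟩ : (((Sᶜ : Set V) \ {t0})ᶜ : Set V)))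
        intro e he
        induction e using Sym2.ind with
        | _ u w =>
          rw [mem_edgeSet] at he
          have hG : G.Adj ↑u ↑w := by simpa using he
          by_cases hu : (u : V) ∈ S
          · by_cases hw : (w : V) ∈ S
            · exact absurd hG (hSind _ hu _ hw)
            · have : (w : V) = t0 := by
                have h2 := w.2
                simp only [Set.mem_compl_iff, Set.mem_diff, Set.mem_compl_iff, not_and,
                  not_not] at h2
                exact h2 hw
              rw [Sym2.mem_iff]
              right
              exact Subtype.ext this.symm
          · have : (u : V) = t0 := by
              have h2 := u.2
              simp only [Set.mem_compl_iff, Set.mem_diff, Set.mem_compl_iff, not_and,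
                not_not] at h2
              exact h2 hu
            rw [Sym2.mem_iff]
            left
            exact Subtype.ext this.symm
      · rw [Set.ncard_diff_singleton_of_mem ht0]
        exact (min_eq_right (Nat.sub_le_sub_right (le_of_not_ge hle) 1)).symm
  · -- lower bound
    rintro n ⟨F, hF, rfl⟩
    by_contra hlt
    push_neg at hlt
    have h1 : F.ncard < S.ncard - 1 := lt_of_lt_of_le hlt (min_le_left _ _)
    have h2 : F.ncard < (Sᶜ : Set V).ncard - 1 := lt_of_lt_of_le hlt (min_le_right _ _)
    have key : ∀ A : Set V, F.ncard < A.ncard - 1 → 1 < (A \ F).ncard := by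
      intro A hA
      have e1 : A.ncard ≤ (A \ F).ncard + F.ncard := by
        calc A.ncard ≤ ((A \ F) ∪ F).ncard := by
              refine Set.ncard_le_ncard ?_ (Set.toFinite _)
              intro x hx
              by_cases h : x ∈ F
              · exact Set.mem_union_right _ h
              · exact Set.mem_union_left _ ⟨hx, h⟩
          _ ≤ (A \ F).ncard + F.ncard := Set.ncard_union_le _ _
      omega
    obtain ⟨s1, s2, hs1, hs2, hss⟩ := (Set.one_lt_ncard_iff (Set.toFinite _)).mp (key S h1)
    obtain ⟨t1, t2, ht1, ht2, htt⟩ := (Set.one_lt_ncard_iff (Set.toFinite _)).mp (key _ h2)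
    have m1 : s1 ∈ (Fᶜ : Set V) := hs1.2
    have m2 : s2 ∈ (Fᶜ : Set V) := hs2.2
    have n1 : t1 ∈ (Fᶜ : Set V) := ht1.2
    have n2 : t2 ∈ (Fᶜ : Set V) := ht2.2
    refine c4_not_acyclic (H := G.induce (Fᶜ : Set V)) (a := ⟨s1, m1⟩) (b := ⟨t1, n1⟩)
      (c := ⟨s2, m2⟩) (d := ⟨t2, n2⟩) ?_ ?_ ?_ ?_ ?_ ?_ hF
    · simpa using hcomp s1 hs1.1 t1 ht1.1
    · simpa using (hcomp s2 hs2.1 t1 ht1.1).symm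
    · simpa using hcomp s2 hs2.1 t2 ht2.1
    · simpa using (hcomp s1 hs1.1 t2 ht2.1).symm
    · exact fun h => hss (congrArg Subtype.val h)
    · exact fun h => htt (congrArg Subtype.val h)
end
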